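/- Let G be a finite simple graph with m edges, let T be a positive integer, and let H be the split graph with vertex set (V(G) × {1,…,T}) ⊔ E(G), where (u,i) is adjacent to the edge-vertex b_e if and only if u is an endpoint of e, and all pairs of distinct edge-vertices are adjacent. For every total coloring c of G there exists a total coloring c' of H with c'((u,i)) = c(u) for all u and all i, such that the number of happy edges of H with respect to c' is at least T·(m + h), where h is the number of happy edges of G with respect to c. -/

import Mathlib

/-- The number of happy edges (edges whose endpoints share a color) w.r.t. a total coloring. -/
noncomputable def happyEdgeCount {V Col : Type*} (G : SimpleGraph V) (c : V → Col) : ℕ :=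
  {e ∈ G.edgeSet | (Sym2.map c e).IsDiag}.ncard

/-- The `T`-copy split gadget of a graph: `T` copies of each vertex of `G`, each adjacent to
the edge-vertices of its incident edges, and the edge-vertices form a clique. -/
def SplitGadget {V : Type*} (G : SimpleGraph V) (T : ℕ) :
    SimpleGraph ((V × Fin T) ⊕ G.edgeSet) where
  Adj x y :=
    match x, y with
    | Sum.inl a, Sum.inr e => a.1 ∈ (e : Sym2 V)
    | Sum.inr e, Sum.inl a => a.1 ∈ (e : Sym2 V)
    | Sum.inr e, Sum.inr f => e ≠ f
    | _, _ => False
  symm := by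
    constructor
    rintro (a | e) (b | f) h <;> simp_all
    exact fun h' => h h'.symm
  loopless := by
    constructor
    rintro (a | e) h <;> simp_all

/-- For every total coloring `c` of `G` there is a total coloring `c'` of the `T`-copy split
gadget of `G` with `c' (u, i) = c u` for all copies, whose number of happy edges is at least
`T * (m + h)`, where `h` is the number of happy edges of `G` w.r.t. `c`. -/
theorem splitGadget_happyEdges_ge
    {V Col : Type*} [Fintype V] [DecidableEq V] (G : SimpleGraph V) [DecidableRel G.Adj]
    (T : ℕ) (hT : 0 < T) (c : V → Col) :
    ∃ c' : ((V × Fin T) ⊕ G.edgeSet) → Col,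
      (∀ (u : V) (i : Fin T), c' (Sum.inl (u, i)) = c u) ∧
      T * (G.edgeSet.ncard + happyEdgeCount G c) ≤ happyEdgeCount (SplitGadget G T) c' := by
  classical
  set c' : ((V × Fin T) ⊕ G.edgeSet) → Col :=
    Sum.elim (fun a => c a.1) (fun e => c (e : Sym2 V).out.1) with hc'
  refine ⟨c', fun u i => rfl, ?_⟩
  -- target set
  let S : Set (Sym2 ((V × Fin T) ⊕ G.edgeSet)) :=
    {e ∈ (SplitGadget G T).edgeSet | (Sym2.map c' e).IsDiag}
  let A : Set (Sym2 V) := G.edgeSet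
  let B : Set (Sym2 V) := {e ∈ G.edgeSet | (Sym2.map c e).IsDiag}
  -- the injection
  have key : ∀ (e : Sym2 V) (he : e ∈ G.edgeSet) (i : Fin T) (v : V) (hv : v ∈ e)
      (hcv : c v = c e.out.1),
      s(Sum.inl (v, i), (Sum.inr ⟨e, he⟩ : (V × Fin T) ⊕ G.edgeSet)) ∈ S := by
    intro e he i v hv hcv
    refine ⟨hv, ?_⟩
    simp only [Sym2.map_pair_eq, Sym2.mk_isDiag_iff, hc', Sum.elim_inl, Sum.elim_inr]
    exact hcv
  let F : Fin T × (A ⊕ B) → S := fun p =>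
    match p with
    | (i, Sum.inl ⟨e, he⟩) => ⟨_, key e he i e.out.1 e.out_fst_mem rfl⟩
    | (i, Sum.inr ⟨e, he⟩) => ⟨_, key e he.1 i e.out.2 e.out_snd_mem (by
        have := he.2
        rw [← e.out_eq] at this
        exact (Sym2.mk_isDiag_iff.mp this).symm)⟩
  have hne : ∀ e : Sym2 V, e ∈ G.edgeSet → e.out.1 ≠ e.out.2 := by
    intro e he h
    apply G.not_isDiag_of_mem_edgeSet he
    rw [← e.out_eq]
    exact Sym2.mk_isDiag_iff.mpr h
  have hF : Function.Injective F := by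
    rintro ⟨i, (⟨e, he⟩ | ⟨e, he⟩)⟩ ⟨j, (⟨f, hf⟩ | ⟨f, hf⟩)⟩ h <;>
      simp only [F, Subtype.mk.injEq, Sym2.eq, Sym2.rel_iff', Prod.mk.injEq,
        Sum.inl.injEq, Sum.inr.injEq, Subtype.mk.injEq, Prod.swap_prod_mk,
        reduceCtorEq, and_false, false_and, or_false] at h
    · obtain ⟨⟨h1, h2⟩, h3⟩ := h
      subst h3; simp [h2]
    · obtain ⟨⟨h1, h2⟩, h3⟩ := h
      subst h3
      exact absurd h1 (hne e he)
    · obtain ⟨⟨h1, h2⟩, h3⟩ := h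
      subst h3
      exact absurd h1.symm (hne e he.1)
    · obtain ⟨⟨h1, h2⟩, h3⟩ := h
      subst h3; simp [h2]
  have hcard : Nat.card (Fin T × (A ⊕ B)) ≤ Nat.card S :=
    Nat.card_le_card_of_injective F hF
  calc T * (G.edgeSet.ncard + happyEdgeCount G c)
      = Nat.card (Fin T × (A ⊕ B)) := by
        rw [Nat.card_prod, Nat.card_sum, Nat.card_eq_fintype_card (α := Fin T),
          Fintype.card_fin, Nat.card_coe_set_eq, Nat.card_coe_set_eq]
        rfl
    _ ≤ Nat.card S := hcard
    _ = happyEdgeCount (SplitGadget G T) c' := by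
        rw [happyEdgeCount, ← Nat.card_coe_set_eq]
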